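/- arXiv:2412.17074 — 4 statements merged into one kernel-verified Lean document; each statement's English description precedes it below -/
import Mathlib

section
/- For every connected graph G, the local metric dimension satisfies dim_l(G) ≥ ⌈log₂ ω(G)⌉. -/
open SimpleGraph

variable {V : Type*}

/-- `W` is a local resolving set of `G`: any two adjacent vertices outside `W`
have different distance to some vertex of `W`. -/
def IsLocalResolvingSet [Fintype V] (G : SimpleGraph V) (W : Finset V) : Prop :=
  ∀ u v : V, u ∉ W → v ∉ W → G.Adj u v → ∃ w ∈ W, G.dist u w ≠ G.dist v w

/-- The local metric dimension of `G`: minimum cardinality of a local resolving set. -/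
noncomputable def localDim [Fintype V] (G : SimpleGraph V) : ℕ :=
  sInf {k | ∃ W : Finset V, IsLocalResolvingSet G W ∧ W.card = k}

/-- `K_n^-(λ,μ)`: complete graph on `Fin n` minus the edges of a complete bipartite
subgraph between `L = [0,lam)` and `M = [lam, lam+mu)`. -/
def KnMinus (n lam mu : ℕ) : SimpleGraph (Fin n) where
  Adj u v := u ≠ v ∧ ¬((u.val < lam ∧ lam ≤ v.val ∧ v.val < lam + mu) ∨
                       (v.val < lam ∧ lam ≤ u.val ∧ u.val < lam + mu))
  symm := ⟨by
    intro u v ⟨h1, h2⟩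
    exact ⟨h1.symm, fun h => h2 h.symm⟩⟩
  loopless := ⟨fun u h => h.1 rfl⟩

/-- The graph `Γ₁`: a `K₄` on `{0,1,2,3}` plus edges `0-4`, `1-4`, `0-5`, `2-5`
(vertices `0,…,5` standing for `v₁,…,v₆`). -/
def Gamma1 : SimpleGraph (Fin 6) :=
  SimpleGraph.fromRel (fun u v => ((u : ℕ), (v : ℕ)) ∈
    [(0,1),(0,2),(0,3),(1,2),(1,3),(2,3),(0,4),(1,4),(0,5),(2,5)])

/-- The graph `Γ₂ = Γ₁` plus the edge `v₅v₆`. -/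
def Gamma2 : SimpleGraph (Fin 6) :=
  SimpleGraph.fromRel (fun u v => ((u : ℕ), (v : ℕ)) ∈
    [(0,1),(0,2),(0,3),(1,2),(1,3),(2,3),(0,4),(1,4),(0,5),(2,5),(4,5)])

/-- `G_ℓ`: a universal vertex (`none`) joined to the disjoint union of `ℓ` triangles. -/
def Gell (l : ℕ) : SimpleGraph (Option (Fin l × Fin 3)) where
  Adj u v := u ≠ v ∧ ∀ x y, u = some x → v = some y → x.1 = y.1
  symm := ⟨by
    intro u v ⟨h1, h2⟩
    exact ⟨h1.symm, fun x y hx hy => (h2 y x hy hx).symm⟩⟩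
  loopless := ⟨fun u h => h.1 rfl⟩

/-- For every connected graph `G`, `dim_l(G) ≥ ⌈log₂ ω(G)⌉`. -/
theorem stmt_4 [Fintype V] (G : SimpleGraph V) (hconn : G.Connected) :
    Nat.clog 2 G.cliqueNum ≤ localDim G := by
  classical
  rw [Nat.clog_le_iff_le_pow (by norm_num : 1 < 2)]
  have hne : {k | ∃ W : Finset V, IsLocalResolvingSet G W ∧ W.card = k}.Nonempty :=
    ⟨Finset.univ.card, Finset.univ, fun u v hu _ _ => absurd (Finset.mem_univ u) hu, rfl⟩
  obtain ⟨W, hW, hcard⟩ := Nat.sInf_mem hne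
  obtain ⟨s, hs⟩ := G.exists_isNClique_cliqueNum
  rcases s.eq_empty_or_nonempty with rfl | hsne
  · rw [← hs.card_eq]; simp [Nat.one_le_two_pow]
  -- minimum distance from the clique to w
  set m : V → ℕ := fun w => (s.image (fun u => G.dist u w)).min' (hsne.image _) with hm
  have hmem : ∀ u ∈ s, ∀ w, m w ≤ G.dist u w := fun u hu w =>
    Finset.min'_le _ _ (Finset.mem_image_of_mem _ hu)
  have hub : ∀ u ∈ s, ∀ w, G.dist u w ≤ m w + 1 := by
    intro u hu w
    obtain ⟨x, hx, hxe⟩ := Finset.mem_image.mp ((s.image (fun u => G.dist u w)).min'_mem (hsne.image _))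
    rcases eq_or_ne u x with rfl | hux
    · have hmw : m w = G.dist u w := hxe.symm
      omega
    · have hadj : G.Adj u x := hs.isClique hu hx hux
      calc G.dist u w ≤ G.dist u x + G.dist x w := hconn.dist_triangle
        _ = 1 + m w := by
            have hmw : m w = G.dist x w := hxe.symm
            rw [SimpleGraph.dist_eq_one_iff_adj.mpr hadj, hmw]
        _ = m w + 1 := by omega
  set f : V → ({x // x ∈ W} → Bool) := fun u w => decide (G.dist u w.1 = m w.1) with hf
  have hinj : Set.InjOn f s := by
    intro u hu v hv huv
    by_contra hne'
    have hadj : G.Adj u v := hs.isClique hu hv hne'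
    have key : ∀ w : V, w ∈ W → G.dist u w ≠ G.dist v w → False := by
      intro w hwW hd
      have h1 := hmem u hu w
      have h2 := hmem v hv w
      have h3 := hub u hu w
      have h4 := hub v hv w
      have := congrFun huv ⟨w, hwW⟩
      simp only [hf, decide_eq_decide] at this
      omega
    by_cases huW : u ∈ W
    · exact key u huW (by
        have h0 : G.dist u u = 0 := SimpleGraph.dist_self
        have : 0 < G.dist v u := hconn.pos_dist_of_ne (Ne.symm hne')
        omega)
    by_cases hvW : v ∈ W
    · exact key v hvW (by
        have h0 : G.dist v v = 0 := SimpleGraph.dist_self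
        have : 0 < G.dist u v := hconn.pos_dist_of_ne hne'
        omega)
    obtain ⟨w, hwW, hd⟩ := hW u v huW hvW hadj
    exact key w hwW hd
  have hcardle : s.card ≤ 2 ^ W.card := by
    calc s.card = Fintype.card {x // x ∈ s} := (Fintype.card_coe s).symm
      _ ≤ Fintype.card ({x // x ∈ W} → Bool) := Fintype.card_le_of_injective
          (fun u => f u.1) (fun a b hab => Subtype.ext (hinj a.2 b.2 hab))
      _ = 2 ^ W.card := by simp [Fintype.card_fun]
  rw [← hs.card_eq]
  unfold localDim
  rw [← hcard]
  exact hcardle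
end

section
/- For every connected graph G, the local metric dimension satisfies dim_l(G) ≥ n(G) - 2^{n(G) - ω(G)}. -/
open SimpleGraph

variable {V : Type*}

lemma aux_pow_sub (q p : ℕ) (h : q ≤ p) : p + 2 ^ q ≤ 2 ^ p + q := by
  induction p, h using Nat.le_induction with
  | base => omega
  | succ p hq ih =>
      have : 1 ≤ 2 ^ p := Nat.one_le_two_pow
      have : 2 ^ (p + 1) = 2 ^ p + 2 ^ p := by ring
      omega

/-- For every connected graph `G`, `dim_l(G) ≥ n(G) - 2 ^ (n(G) - ω(G))`. -/
theorem stmt_5 [Fintype V] (G : SimpleGraph V) (hconn : G.Connected) :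
    Fintype.card V - 2 ^ (Fintype.card V - G.cliqueNum) ≤ localDim G := by
  classical
  -- obtain a minimum local resolving set
  have hne : {k | ∃ W : Finset V, IsLocalResolvingSet G W ∧ W.card = k}.Nonempty := by
    exact ⟨Finset.univ.card, Finset.univ, fun u v hu _ _ => absurd (Finset.mem_univ u) hu, rfl⟩
  obtain ⟨W, hW, hWcard⟩ := Nat.sInf_mem hne
  -- obtain a maximum clique
  obtain ⟨C, hC⟩ := G.exists_isNClique_cliqueNum
  set n := Fintype.card V
  set ω := G.cliqueNum
  set k := W.card
  rw [localDim, ← hWcard]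
  rw [tsub_le_iff_right]
  -- key injection: vertices of C \ W are distinguished by distance parity to W \ C
  have key : (C \ W).card ≤ 2 ^ (W \ C).card := by
    have hinj : Set.InjOn (fun u => fun w : ↥(W \ C) => decide (G.dist u w.1 % 2 = 1))
        ↑(C \ W) := by
      intro u hu v hv hf
      by_contra hne'
      simp only [Finset.coe_sdiff, Set.mem_diff, Finset.mem_coe] at hu hv
      have hadj : G.Adj u v := hC.isClique hu.1 hv.1 hne'
      obtain ⟨w, hwW, hwd⟩ := hW u v hu.2 hv.2 hadj
      by_cases hwC : w ∈ C
      · -- w in the clique: both distances are 1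
        have hu1 : G.dist u w = 1 := by
          rw [SimpleGraph.dist_eq_one_iff_adj]
          exact hC.isClique hu.1 hwC (fun h => hu.2 (h ▸ hwW))
        have hv1 : G.dist v w = 1 := by
          rw [SimpleGraph.dist_eq_one_iff_adj]
          exact hC.isClique hv.1 hwC (fun h => hv.2 (h ▸ hwW))
        exact hwd (hu1.trans hv1.symm)
      · -- w outside the clique: same parity and difference ≤ 1
        have hw' : w ∈ W \ C := Finset.mem_sdiff.2 ⟨hwW, hwC⟩
        have hpar := congrFun hf ⟨w, hw'⟩
        simp only [decide_eq_decide] at hpar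
        have h1 : G.dist u w ≤ G.dist u v + G.dist v w := hconn.dist_triangle
        have h2 : G.dist v w ≤ G.dist v u + G.dist u w := hconn.dist_triangle
        have huv : G.dist u v = 1 := SimpleGraph.dist_eq_one_iff_adj.2 hadj
        have hvu : G.dist v u = 1 := SimpleGraph.dist_eq_one_iff_adj.2 hadj.symm
        omega
    calc (C \ W).card ≤ (Finset.univ : Finset (↥(W \ C) → Bool)).card :=
          Finset.card_le_card_of_injOn _ (fun _ _ => Finset.mem_univ _) hinj
      _ = 2 ^ (W \ C).card := by
          rw [Finset.card_univ, Fintype.card_fun, Fintype.card_coe, Fintype.card_bool]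
  -- counting
  have hCcard : C.card = ω := hC.card_eq
  have hCsplit : (C \ W).card + (C ∩ W).card = ω := by
    rw [Finset.card_sdiff_add_card_inter]; exact hCcard
  have hWsplit : (W \ C).card + (W ∩ C).card = k := Finset.card_sdiff_add_card_inter W C
  have hinterc : (C ∩ W).card = (W ∩ C).card := by rw [Finset.inter_comm]
  have hωn : ω ≤ n := hCcard ▸ Finset.card_le_univ C
  have hq : (W \ C).card ≤ n - ω := by
    have : W \ C ⊆ Finset.univ \ C := Finset.sdiff_subset_sdiff (Finset.subset_univ W) le_rfl
    have := Finset.card_le_card this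
    rwa [Finset.card_univ_diff, hCcard] at this
  have hmain := aux_pow_sub (W \ C).card (n - ω) hq
  have hpowmono : (2:ℕ) ^ (W \ C).card ≤ 2 ^ (n - ω) := Nat.pow_le_pow_right (by norm_num) hq
  omega
end

section
/- Let n ≥ 3 and let λ, μ be positive integers with 1 ≤ μ ≤ λ and λ + μ ≤ n - 1. Let K_n^-(λ,μ) denote the graph obtained from the complete graph K_n by deleting the edge set of a complete bipartite subgraph K_{λ,μ}. Then dim_l(K_n^-(λ,μ)) = n - 2 if μ = 1, and dim_l(K_n^-(λ,μ)) = n - 3 if μ ≥ 2. -/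
open SimpleGraph

variable {V : Type*}

namespace KnAux

def cls (lam mu : ℕ) {n : ℕ} (u : Fin n) : Fin 3 :=
  if u.val < lam then 0 else if u.val < lam + mu then 1 else 2

variable {n lam mu : ℕ}

def Cross (lam mu : ℕ) {n : ℕ} (u v : Fin n) : Prop :=
  (cls lam mu u = 0 ∧ cls lam mu v = 1) ∨ (cls lam mu v = 0 ∧ cls lam mu u = 1)

instance {u v : Fin n} : Decidable (Cross lam mu u v) := by unfold Cross; infer_instance

lemma cls_eq0 {u : Fin n} : cls lam mu u = 0 ↔ u.val < lam := by
  unfold cls; split_ifs <;> simp [Fin.ext_iff] <;> omega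

lemma cls_eq1 {u : Fin n} : cls lam mu u = 1 ↔ lam ≤ u.val ∧ u.val < lam + mu := by
  unfold cls; split_ifs <;> simp [Fin.ext_iff] <;> omega

lemma cls_eq2 {u : Fin n} : cls lam mu u = 2 ↔ lam + mu ≤ u.val := by
  unfold cls; split_ifs <;> simp [Fin.ext_iff] <;> omega

lemma cross_iff {u v : Fin n} : Cross lam mu u v ↔
    ((u.val < lam ∧ lam ≤ v.val ∧ v.val < lam + mu) ∨
     (v.val < lam ∧ lam ≤ u.val ∧ u.val < lam + mu)) := by
  unfold Cross
  rw [cls_eq0, cls_eq1, cls_eq0, cls_eq1]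

lemma adj_iff {u v : Fin n} :
    (KnMinus n lam mu).Adj u v ↔ u ≠ v ∧ ¬ Cross lam mu u v := by
  show (u ≠ v ∧ ¬((u.val < lam ∧ lam ≤ v.val ∧ v.val < lam + mu) ∨
    (v.val < lam ∧ lam ≤ u.val ∧ u.val < lam + mu))) ↔ _
  exact ⟨fun ⟨h1, h2⟩ => ⟨h1, fun hc => h2 (cross_iff.mp hc)⟩,
         fun ⟨h1, h2⟩ => ⟨h1, fun hc => h2 (cross_iff.mpr hc)⟩⟩

lemma dist_of_ne (hn : 3 ≤ n) (hsum : lam + mu ≤ n - 1) {u v : Fin n} (huv : u ≠ v) :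
    (KnMinus n lam mu).dist u v = if Cross lam mu u v then 2 else 1 := by
  by_cases hc : Cross lam mu u v
  · rw [if_pos hc]
    set r : Fin n := ⟨n - 1, by omega⟩ with hrdef
    have hru : u.val < lam + mu := by rw [cross_iff] at hc; omega
    have hrv : v.val < lam + mu := by rw [cross_iff] at hc; omega
    have hrval : lam + mu ≤ r.val := by simp [hrdef]; omega
    have h1 : (KnMinus n lam mu).Adj u r := by
      rw [adj_iff, cross_iff]
      refine ⟨fun h => ?_, by omega⟩
      have := congrArg Fin.val h
      simp [hrdef] at this; omega
    have h2 : (KnMinus n lam mu).Adj r v := by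
      rw [adj_iff, cross_iff]
      refine ⟨fun h => ?_, by omega⟩
      have := congrArg Fin.val h
      simp [hrdef] at this; omega
    have hp : (KnMinus n lam mu).dist u v ≤ 2 :=
      SimpleGraph.dist_le (SimpleGraph.Walk.cons h1 (SimpleGraph.Walk.cons h2 SimpleGraph.Walk.nil))
    have hne0 : (KnMinus n lam mu).dist u v ≠ 0 := by
      intro h0
      rcases SimpleGraph.dist_eq_zero_iff_eq_or_not_reachable.mp h0 with h | h
      · exact huv h
      · exact h ⟨SimpleGraph.Walk.cons h1 (SimpleGraph.Walk.cons h2 SimpleGraph.Walk.nil)⟩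
    have hne1 : (KnMinus n lam mu).dist u v ≠ 1 := by
      intro h0
      exact (adj_iff.mp (SimpleGraph.dist_eq_one_iff_adj.mp h0)).2 hc
    omega
  · rw [if_neg hc]
    exact SimpleGraph.dist_eq_one_iff_adj.mpr (adj_iff.mpr ⟨huv, hc⟩)

end KnAux

namespace KnAux

variable {n lam mu : ℕ}

lemma dist_two (hn : 3 ≤ n) (hsum : lam + mu ≤ n - 1) {u w : Fin n}
    (h : Cross lam mu u w) : (KnMinus n lam mu).dist u w = 2 := by
  have hne : u ≠ w := by
    rintro rfl
    rcases h with ⟨h1, h2⟩ | ⟨h1, h2⟩ <;> exact absurd (h1.symm.trans h2) (by decide)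
  rw [dist_of_ne hn hsum hne, if_pos h]

lemma dist_one (hn : 3 ≤ n) (hsum : lam + mu ≤ n - 1) {u w : Fin n}
    (hne : u ≠ w) (h : ¬ Cross lam mu u w) : (KnMinus n lam mu).dist u w = 1 := by
  rw [dist_of_ne hn hsum hne, if_neg h]

lemma same_class (hn : 3 ≤ n) (hsum : lam + mu ≤ n - 1) {W : Finset (Fin n)}
    (hW : IsLocalResolvingSet (KnMinus n lam mu) W) {u v : Fin n}
    (hu : u ∉ W) (hv : v ∉ W) (hc : cls lam mu u = cls lam mu v) : u = v := by
  by_contra hne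
  have hadj : (KnMinus n lam mu).Adj u v := by
    rw [adj_iff]
    refine ⟨hne, ?_⟩
    rw [Cross, hc]
    rintro (⟨h1, h2⟩ | ⟨h1, h2⟩) <;> exact absurd (h1.symm.trans h2) (by decide)
  obtain ⟨w, hwW, hwd⟩ := hW u v hu hv hadj
  have hwu : u ≠ w := fun h => hu (h ▸ hwW)
  have hwv : v ≠ w := fun h => hv (h ▸ hwW)
  rw [dist_of_ne hn hsum hwu, dist_of_ne hn hsum hwv] at hwd
  have hiff : Cross lam mu u w ↔ Cross lam mu v w := by rw [Cross, Cross, hc]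
  exact hwd (if_congr hiff rfl rfl)

lemma fin3cases : ∀ c : Fin 3, c = 0 ∨ c = 1 ∨ c = 2 := by decide

lemma card_compl {W : Finset (Fin n)} : (Finset.univ \ W).card = n - W.card := by
  rw [Finset.card_sdiff_of_subset (Finset.subset_univ _), Finset.card_univ, Fintype.card_fin]

lemma lower_bound (hn : 3 ≤ n) (hsum : lam + mu ≤ n - 1) {W : Finset (Fin n)}
    (hW : IsLocalResolvingSet (KnMinus n lam mu) W)
    {t : Finset (Fin 3)} (ht : ∀ a : Fin n, a ∉ W → cls lam mu a ∈ t) :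
    n - t.card ≤ W.card := by
  have hinj : Set.InjOn (cls lam mu) ((Finset.univ \ W : Finset (Fin n)) : Set (Fin n)) := by
    intro a ha b hb hab
    simp only [Finset.coe_sdiff, Finset.coe_univ, Set.mem_diff, Finset.mem_coe] at ha hb
    exact same_class hn hsum hW ha.2 hb.2 hab
  have hcard : (Finset.univ \ W).card ≤ t.card := by
    refine Finset.card_le_card_of_injOn (cls lam mu) (fun a ha => ?_) hinj
    rw [Finset.mem_coe, Finset.mem_sdiff] at ha
    exact ht a ha.2
  have h2 := card_compl (W := W)
  have h3 : W.card ≤ n := by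
    have := Finset.card_le_card (Finset.subset_univ W)
    simpa using this
  omega

end KnAux

open KnAux in
/-- `dim_l(K_n^-(λ,μ)) = n - 2` if `μ = 1`, and `n - 3` otherwise. -/
theorem stmt_6 (n lam mu : ℕ) (hn : 3 ≤ n) (hmu : 1 ≤ mu) (hml : mu ≤ lam)
    (hsum : lam + mu ≤ n - 1) :
    localDim (KnMinus n lam mu) = if mu = 1 then n - 2 else n - 3 := by
  classical
  by_cases h1 : mu = 1
  · subst h1
    rw [if_pos rfl]
    obtain ⟨a, hav⟩ : ∃ x : Fin n, (x : ℕ) = 0 := ⟨⟨0, by omega⟩, rfl⟩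
    obtain ⟨m, hmv⟩ : ∃ x : Fin n, (x : ℕ) = lam := ⟨⟨lam, by omega⟩, rfl⟩
    obtain ⟨c, hcv⟩ : ∃ x : Fin n, (x : ℕ) = lam + 1 := ⟨⟨lam + 1, by omega⟩, rfl⟩
    have hclsa : cls lam 1 a = 0 := cls_eq0.mpr (by omega)
    have hclsm : cls lam 1 m = 1 := cls_eq1.mpr (by omega)
    have hclsc : cls lam 1 c = 2 := cls_eq2.mpr (by omega)
    have hac : a ≠ c := Fin.ne_of_val_ne (by omega)
    have hcls1 : ∀ x : Fin n, cls lam 1 x = 1 → x = m := by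
      intro x hx
      have := cls_eq1.mp hx
      exact Fin.ext (by omega)
    set W : Finset (Fin n) := Finset.univ \ {a, c} with hWdef
    have hres : IsLocalResolvingSet (KnMinus n lam 1) W := by
      intro u v hu hv hadj
      have hu' : u = a ∨ u = c := by
        have : u ∈ ({a, c} : Finset (Fin n)) := by
          by_contra h; exact hu (Finset.mem_sdiff.mpr ⟨Finset.mem_univ _, h⟩)
        simpa using this
      have hv' : v = a ∨ v = c := by
        have : v ∈ ({a, c} : Finset (Fin n)) := by
          by_contra h; exact hv (Finset.mem_sdiff.mpr ⟨Finset.mem_univ _, h⟩)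
        simpa using this
      have hmW : m ∈ W := by
        rw [hWdef, Finset.mem_sdiff]
        refine ⟨Finset.mem_univ _, ?_⟩
        simp only [Finset.mem_insert, Finset.mem_singleton]
        rintro (h | h) <;> (have := congrArg Fin.val h; omega)
      have dam : (KnMinus n lam 1).dist a m = 2 :=
        dist_two hn hsum (Or.inl ⟨hclsa, hclsm⟩)
      have dcm : (KnMinus n lam 1).dist c m = 1 := by
        refine dist_one hn hsum (Fin.ne_of_val_ne (by omega)) ?_
        rintro (⟨h1, h2⟩ | ⟨h1, h2⟩)
        · exact absurd (hclsc.symm.trans h1) (by decide)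
        · exact absurd (hclsc.symm.trans h2) (by decide)
      rcases hu' with rfl | rfl <;> rcases hv' with rfl | rfl
      · exact absurd rfl hadj.ne
      · exact ⟨m, hmW, by rw [dam, dcm]; omega⟩
      · exact ⟨m, hmW, by rw [dam, dcm]; omega⟩
      · exact absurd rfl hadj.ne
    have hcard : W.card = n - 2 := by
      rw [hWdef, Finset.card_sdiff_of_subset (Finset.subset_univ _), Finset.card_univ,
        Fintype.card_fin, Finset.card_pair hac]
    have hmem : (n - 2) ∈ {k | ∃ W : Finset (Fin n),
        IsLocalResolvingSet (KnMinus n lam 1) W ∧ W.card = k} := ⟨W, hres, hcard⟩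
    refine le_antisymm (Nat.sInf_le hmem) (le_csInf ⟨_, hmem⟩ ?_)
    rintro k ⟨W', hW', rfl⟩
    by_cases hmW' : m ∈ W'
    · have ht : ∀ x : Fin n, x ∉ W' → cls lam 1 x ∈ ({0, 2} : Finset (Fin 3)) := by
        intro x hx
        rcases fin3cases (cls lam 1 x) with h | h | h
        · simp [h]
        · exact absurd ((hcls1 x h) ▸ hx) (by simpa using hmW')
        · simp [h]
      have := lower_bound hn hsum hW' ht
      have h02 : ({0, 2} : Finset (Fin 3)).card = 2 := by decide
      omega
    · have hkey : (∀ x : Fin n, x ∉ W' → cls lam 1 x ≠ 0) ∨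
          (∀ x : Fin n, x ∉ W' → cls lam 1 x ≠ 2) := by
        by_contra hcon
        push_neg at hcon
        obtain ⟨⟨u0, hu0, hu00⟩, ⟨v0, hv0, hv02⟩⟩ := hcon
        have hadj : (KnMinus n lam 1).Adj u0 v0 := by
          rw [adj_iff]
          refine ⟨fun h => absurd ((h ▸ hu00).symm.trans hv02) (by decide), ?_⟩
          rintro (⟨h1, h2⟩ | ⟨h1, h2⟩)
          · exact absurd (hv02.symm.trans h2) (by decide)
          · exact absurd (hv02.symm.trans h1) (by decide)
        obtain ⟨w, hwW, hwd⟩ := hW' u0 v0 hu0 hv0 hadj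
        have hw1 : cls lam 1 w ≠ 1 := fun h => hmW' ((hcls1 w h) ▸ hwW)
        have hu0w : u0 ≠ w := fun h => hu0 (h ▸ hwW)
        have hv0w : v0 ≠ w := fun h => hv0 (h ▸ hwW)
        apply hwd
        rw [dist_one hn hsum hu0w ?_, dist_one hn hsum hv0w ?_]
        · rintro (⟨h1, h2⟩ | ⟨h1, h2⟩)
          · exact absurd (hv02.symm.trans h1) (by decide)
          · exact absurd (hv02.symm.trans h2) (by decide)
        · rintro (⟨h1, h2⟩ | ⟨h1, h2⟩)
          · exact hw1 h2
          · exact absurd (hu00.symm.trans h2) (by decide)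
      rcases hkey with hk | hk
      · have ht : ∀ x : Fin n, x ∉ W' → cls lam 1 x ∈ ({1, 2} : Finset (Fin 3)) := by
          intro x hx
          rcases fin3cases (cls lam 1 x) with h | h | h
          · exact absurd h (hk x hx)
          · simp [h]
          · simp [h]
        have := lower_bound hn hsum hW' ht
        have h12 : ({1, 2} : Finset (Fin 3)).card = 2 := by decide
        omega
      · have ht : ∀ x : Fin n, x ∉ W' → cls lam 1 x ∈ ({0, 1} : Finset (Fin 3)) := by
          intro x hx
          rcases fin3cases (cls lam 1 x) with h | h | h
          · simp [h]
          · simp [h]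
          · exact absurd h (hk x hx)
        have := lower_bound hn hsum hW' ht
        have h01 : ({0, 1} : Finset (Fin 3)).card = 2 := by decide
        omega
  · rw [if_neg h1]
    have hmu2 : 2 ≤ mu := by omega
    have hlam2 : 2 ≤ lam := by omega
    obtain ⟨a, hav⟩ : ∃ x : Fin n, (x : ℕ) = 0 := ⟨⟨0, by omega⟩, rfl⟩
    obtain ⟨b, hbv⟩ : ∃ x : Fin n, (x : ℕ) = lam := ⟨⟨lam, by omega⟩, rfl⟩
    obtain ⟨c, hcv⟩ : ∃ x : Fin n, (x : ℕ) = lam + mu := ⟨⟨lam + mu, by omega⟩, rfl⟩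
    obtain ⟨w1, hw1v⟩ : ∃ x : Fin n, (x : ℕ) = lam + 1 := ⟨⟨lam + 1, by omega⟩, rfl⟩
    obtain ⟨w2, hw2v⟩ : ∃ x : Fin n, (x : ℕ) = 1 := ⟨⟨1, by omega⟩, rfl⟩
    have hclsa : cls lam mu a = 0 := cls_eq0.mpr (by omega)
    have hclsb : cls lam mu b = 1 := cls_eq1.mpr (by omega)
    have hclsc : cls lam mu c = 2 := cls_eq2.mpr (by omega)
    have hclsw1 : cls lam mu w1 = 1 := cls_eq1.mpr (by omega)
    have hclsw2 : cls lam mu w2 = 0 := cls_eq0.mpr (by omega)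
    set W : Finset (Fin n) := Finset.univ \ {a, b, c} with hWdef
    have hres : IsLocalResolvingSet (KnMinus n lam mu) W := by
      intro u v hu hv hadj
      have hu' : u = a ∨ u = b ∨ u = c := by
        have : u ∈ ({a, b, c} : Finset (Fin n)) := by
          by_contra h; exact hu (Finset.mem_sdiff.mpr ⟨Finset.mem_univ _, h⟩)
        simpa using this
      have hv' : v = a ∨ v = b ∨ v = c := by
        have : v ∈ ({a, b, c} : Finset (Fin n)) := by
          by_contra h; exact hv (Finset.mem_sdiff.mpr ⟨Finset.mem_univ _, h⟩)
        simpa using this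
      have hw1W : w1 ∈ W := by
        rw [hWdef, Finset.mem_sdiff]
        refine ⟨Finset.mem_univ _, ?_⟩
        simp only [Finset.mem_insert, Finset.mem_singleton]
        rintro (h | h | h) <;> (have := congrArg Fin.val h; omega)
      have hw2W : w2 ∈ W := by
        rw [hWdef, Finset.mem_sdiff]
        refine ⟨Finset.mem_univ _, ?_⟩
        simp only [Finset.mem_insert, Finset.mem_singleton]
        rintro (h | h | h) <;> (have := congrArg Fin.val h; omega)
      have daw1 : (KnMinus n lam mu).dist a w1 = 2 :=
        dist_two hn hsum (Or.inl ⟨hclsa, hclsw1⟩)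
      have dcw1 : (KnMinus n lam mu).dist c w1 = 1 := by
        refine dist_one hn hsum (Fin.ne_of_val_ne (by omega)) ?_
        rintro (⟨h1, h2⟩ | ⟨h1, h2⟩)
        · exact absurd (hclsc.symm.trans h1) (by decide)
        · exact absurd (hclsc.symm.trans h2) (by decide)
      have dbw2 : (KnMinus n lam mu).dist b w2 = 2 :=
        dist_two hn hsum (Or.inr ⟨hclsw2, hclsb⟩)
      have dcw2 : (KnMinus n lam mu).dist c w2 = 1 := by
        refine dist_one hn hsum (Fin.ne_of_val_ne (by omega)) ?_
        rintro (⟨h1, h2⟩ | ⟨h1, h2⟩)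
        · exact absurd (hclsc.symm.trans h1) (by decide)
        · exact absurd (hclsc.symm.trans h2) (by decide)
      rcases hu' with rfl | rfl | rfl <;> rcases hv' with rfl | rfl | rfl
      · exact absurd rfl hadj.ne
      · exact absurd (Or.inl ⟨hclsa, hclsb⟩) ((adj_iff.mp hadj).2)
      · exact ⟨w1, hw1W, by rw [daw1, dcw1]; omega⟩
      · exact absurd (Or.inr ⟨hclsa, hclsb⟩) ((adj_iff.mp hadj).2)
      · exact absurd rfl hadj.ne
      · exact ⟨w2, hw2W, by rw [dbw2, dcw2]; omega⟩
      · exact ⟨w1, hw1W, by rw [daw1, dcw1]; omega⟩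
      · exact ⟨w2, hw2W, by rw [dbw2, dcw2]; omega⟩
      · exact absurd rfl hadj.ne
    have hcard : W.card = n - 3 := by
      rw [hWdef, Finset.card_sdiff_of_subset (Finset.subset_univ _), Finset.card_univ,
        Fintype.card_fin]
      congr 1
      rw [Finset.card_insert_of_notMem, Finset.card_pair]
      · exact Fin.ne_of_val_ne (by omega)
      · simp only [Finset.mem_insert, Finset.mem_singleton]
        rintro (h | h) <;> (have := congrArg Fin.val h; omega)
    have hmem : (n - 3) ∈ {k | ∃ W : Finset (Fin n),
        IsLocalResolvingSet (KnMinus n lam mu) W ∧ W.card = k} := ⟨W, hres, hcard⟩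
    refine le_antisymm (Nat.sInf_le hmem) (le_csInf ⟨_, hmem⟩ ?_)
    rintro k ⟨W', hW', rfl⟩
    have := lower_bound hn hsum hW' (t := Finset.univ) (fun x _ => Finset.mem_univ _)
    have h3 : (Finset.univ : Finset (Fin 3)).card = 3 := by decide
    omega
end

section
/- If G is a connected graph with ω(G) ∈ {n(G)-1, n(G)-2, n(G)-3} and n(G) ≥ ω(G) + 1 ≥ 4, then dim_l(G) ≤ ((ω(G) - 2)/(ω(G) - 1)) · n(G). -/
open SimpleGraph

variable {V : Type*}

/-! ### Auxiliary machinery for the main theorem -/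

/-- A set all of whose internal edges are resolved, by adjacency, from outside. -/
def GoodSet (G : SimpleGraph V) (S : Finset V) : Prop :=
  ∀ u ∈ S, ∀ v ∈ S, G.Adj u v → ∃ w ∉ S, ¬(G.Adj u w ↔ G.Adj v w)

lemma goodSet_isLocalResolvingSet [Fintype V] [DecidableEq V] {G : SimpleGraph V}
    {S : Finset V} (hS : GoodSet G S) : IsLocalResolvingSet G Sᶜ := by
  intro u v hu hv hadj
  rw [Finset.mem_compl, not_not] at hu hv
  obtain ⟨w, hw, hne⟩ := hS u hu v hv hadj
  refine ⟨w, Finset.mem_compl.mpr hw, ?_⟩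
  by_cases hadjuw : G.Adj u w
  · have h1 : G.dist u w = 1 := dist_eq_one_iff_adj.mpr hadjuw
    have h2 : ¬ G.Adj v w := fun h => hne (iff_of_true hadjuw h)
    intro hEq
    rw [hEq] at h1
    exact h2 (dist_eq_one_iff_adj.mp h1)
  · have h2 : G.Adj v w := by
      by_contra h2
      exact hne (iff_of_false hadjuw h2)
    have h1 : G.dist v w = 1 := dist_eq_one_iff_adj.mpr h2
    intro hEq
    rw [← hEq] at h1
    exact hadjuw (dist_eq_one_iff_adj.mp h1)

lemma localDim_le_of_goodSet [Fintype V] {G : SimpleGraph V} {S : Finset V}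
    (hS : GoodSet G S) : localDim G ≤ Fintype.card V - S.card := by
  classical
  have h := goodSet_isLocalResolvingSet hS
  have h2 : localDim G ≤ Sᶜ.card := Nat.sInf_le ⟨Sᶜ, h, rfl⟩
  rwa [Finset.card_compl] at h2

lemma goodSet_pair [DecidableEq V] {G : SimpleGraph V} {a b : V} (h : ¬G.Adj a b) :
    GoodSet G {a, b} := by
  intro u hu v hv hadj
  simp only [Finset.mem_insert, Finset.mem_singleton] at hu hv
  rcases hu with rfl | rfl <;> rcases hv with rfl | rfl
  exacts [(G.irrefl hadj).elim, (h hadj).elim, (h hadj.symm).elim, (G.irrefl hadj).elim]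

lemma goodSet_triple_of [DecidableEq V] {G : SimpleGraph V} {a b c : V} (hnab : ¬G.Adj a b)
    (hac : G.Adj a c → ∃ w, w ≠ a ∧ w ≠ b ∧ w ≠ c ∧ ¬(G.Adj a w ↔ G.Adj c w))
    (hbc : G.Adj b c → ∃ w, w ≠ a ∧ w ≠ b ∧ w ≠ c ∧ ¬(G.Adj b w ↔ G.Adj c w)) :
    GoodSet G {a, b, c} := by
  have notmem : ∀ w : V, w ≠ a → w ≠ b → w ≠ c → w ∉ ({a, b, c} : Finset V) := by
    intro w h1 h2 h3; simp [h1, h2, h3]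
  intro u hu v hv hadj
  simp only [Finset.mem_insert, Finset.mem_singleton] at hu hv
  rcases hu with rfl | rfl | rfl <;> rcases hv with rfl | rfl | rfl
  · exact (G.irrefl hadj).elim
  · exact (hnab hadj).elim
  · obtain ⟨w, h1, h2, h3, h4⟩ := hac hadj
    exact ⟨w, notmem w h1 h2 h3, h4⟩
  · exact (hnab hadj.symm).elim
  · exact (G.irrefl hadj).elim
  · obtain ⟨w, h1, h2, h3, h4⟩ := hbc hadj
    exact ⟨w, notmem w h1 h2 h3, h4⟩
  · obtain ⟨w, h1, h2, h3, h4⟩ := hac hadj.symm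
    exact ⟨w, notmem w h1 h2 h3, fun h => h4 h.symm⟩
  · obtain ⟨w, h1, h2, h3, h4⟩ := hbc hadj.symm
    exact ⟨w, notmem w h1 h2 h3, fun h => h4 h.symm⟩
  · exact (G.irrefl hadj).elim

lemma aux_main [DecidableEq V] {G : SimpleGraph V} (hconn : G.Connected)
    (htri : ∀ x y z : V, x ≠ y → x ≠ z → y ≠ z → ¬G.Adj x y → ¬G.Adj x z → G.Adj y z)
    (hD : ∀ x y z w : V, x ≠ y → x ≠ z → y ≠ z → ¬G.Adj x y → ¬G.Adj x z →
      w ≠ x → w ≠ y → w ≠ z → (G.Adj y w ↔ G.Adj z w))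
    (a b c d : V) (hab : a ≠ b) (hac : a ≠ c) (had : a ≠ d) (hbc : b ≠ c)
    (hbd : b ≠ d) (hcd : c ≠ d)
    (hnab : ¬G.Adj a b) (hncd : ¬G.Adj c d) (hnac : ¬G.Adj a c) :
    ∃ x y z : V, x ≠ y ∧ x ≠ z ∧ y ≠ z ∧ GoodSet G {x, y, z} := by
  have hnbd : ¬G.Adj b d := fun h =>
    hncd ((hD a b c d hab hac hbc hnab hnac had.symm hbd.symm hcd.symm).mp h)
  have keyX : ∀ x, x ≠ a → ¬G.Adj a x →
      ∀ w, ((w ≠ x ∧ ¬G.Adj x w) ↔ (w ≠ b ∧ ¬G.Adj b w)) := by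
    intro x hxa hax w
    by_cases hxb : x = b
    · subst hxb; exact Iff.rfl
    have hadjbx : G.Adj b x := htri a b x hab hxa.symm (fun h => hxb h.symm) hnab hax
    by_cases hwa : w = a
    · subst hwa
      exact iff_of_true ⟨hxa.symm, fun h => hax h.symm⟩ ⟨hab, fun h => hnab h.symm⟩
    by_cases hwx : w = x
    · subst hwx
      exact iff_of_false (fun h => h.1 rfl) (fun h => h.2 hadjbx)
    by_cases hwb : w = b
    · subst hwb
      exact iff_of_false (fun h => h.2 hadjbx.symm) (fun h => h.1 rfl)
    · have hiff := hD a x b w hxa.symm hab hxb hax hnab hwa hwx hwb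
      constructor
      · rintro ⟨-, h⟩; exact ⟨hwb, fun hb => h (hiff.mpr hb)⟩
      · rintro ⟨-, h⟩; exact ⟨hwx, fun hx => h (hiff.mp hx)⟩
  have keyY : ∀ y, y ≠ b → ¬G.Adj b y →
      ∀ w, ((w ≠ y ∧ ¬G.Adj y w) ↔ (w ≠ a ∧ ¬G.Adj a w)) := by
    intro y hyb hby w
    by_cases hya : y = a
    · subst hya; exact Iff.rfl
    have hadjay : G.Adj a y :=
      htri b a y hab.symm hyb.symm (fun h => hya h.symm) (fun h => hnab h.symm) hby
    by_cases hwb : w = b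
    · subst hwb
      exact iff_of_true ⟨hyb.symm, fun h => hby h.symm⟩ ⟨hab.symm, hnab⟩
    by_cases hwy : w = y
    · subst hwy
      exact iff_of_false (fun h => h.1 rfl) (fun h => h.2 hadjay)
    by_cases hwa : w = a
    · subst hwa
      exact iff_of_false (fun h => h.2 hadjay.symm) (fun h => h.1 rfl)
    · have hiff := hD b y a w hyb.symm hab.symm hya hby (fun h => hnab h.symm) hwb hwy hwa
      constructor
      · rintro ⟨-, h⟩; exact ⟨hwa, fun ha => h (hiff.mpr ha)⟩
      · rintro ⟨-, h⟩; exact ⟨hwy, fun hy => h (hiff.mp hy)⟩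
  by_cases hout : ∃ e, e ≠ a ∧ e ≠ b ∧ G.Adj a e ∧ G.Adj b e
  · obtain ⟨e, hea, heb, hae, hbe⟩ := hout
    by_cases hw : ∃ w, w ≠ e ∧ ¬G.Adj e w
    · obtain ⟨w, hwe, hew⟩ := hw
      have hwa : w ≠ a := by intro h; subst h; exact hew hae.symm
      have hwb : w ≠ b := by intro h; subst h; exact hew hbe.symm
      have haw : G.Adj a w := by
        by_contra haw
        have := (keyX w hwa haw e).mp ⟨hwe.symm, fun h => hew h.symm⟩
        exact this.2 hbe
      have hbw : G.Adj b w := by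
        by_contra hbw
        have := (keyY w hwb hbw e).mp ⟨hwe.symm, fun h => hew h.symm⟩
        exact this.2 hae
      refine ⟨a, b, e, hab, hea.symm, heb.symm, goodSet_triple_of hnab ?_ ?_⟩
      · exact fun _ => ⟨w, hwa, hwb, hwe, fun h => hew (h.mp haw)⟩
      · exact fun _ => ⟨w, hwa, hwb, hwe, fun h => hew (h.mp hbw)⟩
    · push_neg at hw
      have hce : c ≠ e := by intro h; subst h; exact hnac hae
      have hde : d ≠ e := by intro h; subst h; exact hnbd hbe
      refine ⟨a, b, e, hab, hea.symm, heb.symm, goodSet_triple_of hnab ?_ ?_⟩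
      · exact fun _ => ⟨c, hac.symm, hbc.symm, hce, fun h => hnac (h.mpr (hw c hce))⟩
      · exact fun _ => ⟨d, had.symm, hbd.symm, hde, fun h => hnbd (h.mpr (hw d hde))⟩
  · push_neg at hout
    exfalso
    have hXb : b ≠ a ∧ ¬G.Adj a b := ⟨hab.symm, hnab⟩
    have hclosed : ∀ x z, (x ≠ a ∧ ¬G.Adj a x) → G.Adj x z → (z ≠ a ∧ ¬G.Adj a z) := by
      intro x z hx hxz
      by_contra hz
      by_cases hza : z = a
      · subst hza; exact hx.2 hxz.symm
      have haz : G.Adj a z := by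
        by_contra haz; exact hz ⟨hza, haz⟩
      by_cases hzb : z = b
      · subst hzb; exact hz ⟨hab.symm, hnab⟩
      have hbz : ¬G.Adj b z := hout z hza hzb haz
      have := (keyX x hx.1 hx.2 z).mpr ⟨hzb, hbz⟩
      exact this.2 hxz
    obtain ⟨p⟩ := hconn.preconnected b a
    have hwalk : ∀ {u v : V} (_ : G.Walk u v),
        (u ≠ a ∧ ¬G.Adj a u) → (v ≠ a ∧ ¬G.Adj a v) := by
      intro u v q
      induction q with
      | nil => exact id
      | cons h q ih => intro hu; exact ih (hclosed _ _ hu h)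
    exact (hwalk p hXb).1 rfl

lemma exists_goodSet_triple [DecidableEq V] {G : SimpleGraph V} (hconn : G.Connected)
    (hnc : ∃ a b : V, a ≠ b ∧ ¬G.Adj a b)
    (hcov : ∀ v : V, ∃ a b : V, a ≠ b ∧ ¬G.Adj a b ∧ a ≠ v ∧ b ≠ v) :
    ∃ x y z : V, x ≠ y ∧ x ≠ z ∧ y ≠ z ∧ GoodSet G {x, y, z} := by
  by_cases htri : ∃ x y z : V, x ≠ y ∧ x ≠ z ∧ y ≠ z ∧ ¬G.Adj x y ∧ ¬G.Adj x z ∧ ¬G.Adj y z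
  · obtain ⟨x, y, z, h1, h2, h3, h4, h5, h6⟩ := htri
    exact ⟨x, y, z, h1, h2, h3, goodSet_triple_of h4 (fun h => absurd h h5)
      (fun h => absurd h h6)⟩
  push_neg at htri
  by_cases hch : ∃ x y z w : V, x ≠ y ∧ x ≠ z ∧ y ≠ z ∧ ¬G.Adj x y ∧ ¬G.Adj x z ∧
      w ≠ x ∧ w ≠ y ∧ w ≠ z ∧ ¬(G.Adj y w ↔ G.Adj z w)
  · obtain ⟨x, y, z, w, h1, h2, h3, h4, h5, h6, h7, h8, h9⟩ := hch
    exact ⟨x, y, z, h1, h2, h3, goodSet_triple_of h4 (fun h => absurd h h5)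
      (fun _ => ⟨w, h6, h7, h8, h9⟩)⟩
  push_neg at hch
  obtain ⟨a, b, hab, hnab⟩ := hnc
  obtain ⟨c0, d0, hcd0, hncd0, hc0a, hd0a⟩ := hcov a
  have hdisj : ∃ p q r s : V, p ≠ q ∧ p ≠ r ∧ p ≠ s ∧ q ≠ r ∧ q ≠ s ∧ r ≠ s ∧
      ¬G.Adj p q ∧ ¬G.Adj r s := by
    by_cases hb : b ≠ c0 ∧ b ≠ d0
    · exact ⟨a, b, c0, d0, hab, hc0a.symm, hd0a.symm, hb.1, hb.2, hcd0, hnab, hncd0⟩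
    have hx : ∃ x, x ≠ a ∧ x ≠ b ∧ ¬G.Adj b x := by
      rcases not_and_or.mp hb with h | h
      · obtain rfl := not_ne_iff.mp h
        exact ⟨d0, hd0a, hcd0.symm, hncd0⟩
      · obtain rfl := not_ne_iff.mp h
        exact ⟨c0, hc0a, hcd0, fun hh => hncd0 hh.symm⟩
    obtain ⟨x, hxa, hxb, hnbx⟩ := hx
    obtain ⟨e, f, hef, hnef, heb, hfb⟩ := hcov b
    by_cases ha2 : e ≠ a ∧ f ≠ a
    · exact ⟨a, b, e, f, hab, ha2.1.symm, ha2.2.symm, heb.symm, hfb.symm, hef, hnab, hnef⟩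
    have hy : ∃ y, y ≠ a ∧ y ≠ b ∧ ¬G.Adj a y := by
      rcases not_and_or.mp ha2 with h | h
      · obtain rfl := not_ne_iff.mp h
        exact ⟨f, hef.symm, hfb, hnef⟩
      · obtain rfl := not_ne_iff.mp h
        exact ⟨e, hef, heb, fun hh => hnef hh.symm⟩
    obtain ⟨y, hya, hyb, hnay⟩ := hy
    have hxy : x ≠ y := by
      intro h; subst h
      exact hnbx (htri a b x hab hxa.symm hxb.symm hnab hnay)
    exact ⟨b, x, a, y, hxb.symm, hab.symm, hyb.symm, hxa, hxy, hya.symm, hnbx, hnay⟩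
  obtain ⟨p, q, r, s, hpq, hpr, hps, hqr, hqs, hrs, hnpq, hnrs⟩ := hdisj
  by_cases h1 : ¬G.Adj p r
  · exact aux_main hconn htri hch p q r s hpq hpr hps hqr hqs hrs hnpq hnrs h1
  by_cases h2 : ¬G.Adj p s
  · exact aux_main hconn htri hch p q s r hpq hps hpr hqs hqr hrs.symm hnpq
      (fun h => hnrs h.symm) h2
  by_cases h3 : ¬G.Adj q r
  · exact aux_main hconn htri hch q p r s hpq.symm hqr hqs hpr hps hrs
      (fun h => hnpq h.symm) hnrs h3
  by_cases h4 : ¬G.Adj q s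
  · exact aux_main hconn htri hch q p s r hpq.symm hqs hqr hps hpr hrs.symm
      (fun h => hnpq h.symm) (fun h => hnrs h.symm) h4
  push_neg at h1 h2 h3 h4
  exact ⟨p, q, r, hpq, hpr, hqr, goodSet_triple_of hnpq
    (fun _ => ⟨s, hps.symm, hqs.symm, hrs.symm, fun h => hnrs (h.mp h2)⟩)
    (fun _ => ⟨s, hps.symm, hqs.symm, hrs.symm, fun h => hnrs (h.mp h4)⟩)⟩

lemma exists_nonadj [Fintype V] {G : SimpleGraph V}
    (h : G.cliqueNum + 1 ≤ Fintype.card V) :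
    ∃ a b : V, a ≠ b ∧ ¬G.Adj a b := by
  by_contra hc
  push_neg at hc
  have hcl : G.IsClique (↑(Finset.univ : Finset V) : Set V) := by
    intro x _ y _ hxy
    exact hc x y hxy
  have := @SimpleGraph.IsClique.card_le_cliqueNum V G _ Finset.univ hcl
  rw [Finset.card_univ] at this
  omega

lemma exists_nonadj_avoiding [Fintype V] {G : SimpleGraph V}
    (h : G.cliqueNum + 2 ≤ Fintype.card V) (v : V) :
    ∃ a b : V, a ≠ b ∧ ¬G.Adj a b ∧ a ≠ v ∧ b ≠ v := by
  classical
  by_contra hc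
  push_neg at hc
  have hcl : G.IsClique (↑(Finset.univ.erase v) : Set V) := by
    intro x hx y hy hxy
    rw [Finset.mem_coe, Finset.mem_erase] at hx hy
    by_contra hadj
    exact hy.1 (hc x y hxy hadj hx.1)
  have := @SimpleGraph.IsClique.card_le_cliqueNum V G _ (Finset.univ.erase v) hcl
  rw [Finset.card_erase_of_mem (Finset.mem_univ v), Finset.card_univ] at this
  omega

/-- If `ω(G) ∈ {n(G)-1, n(G)-2, n(G)-3}` and `n(G) ≥ ω(G) + 1 ≥ 4`, then
`dim_l(G) ≤ ((ω(G) - 2)/(ω(G) - 1)) · n(G)`. -/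
theorem stmt_13 [Fintype V] (G : SimpleGraph V) (hconn : G.Connected)
    (hw : G.cliqueNum = Fintype.card V - 1 ∨ G.cliqueNum = Fintype.card V - 2 ∨
          G.cliqueNum = Fintype.card V - 3)
    (h1 : G.cliqueNum + 1 ≤ Fintype.card V) (h2 : 4 ≤ G.cliqueNum + 1) :
    (localDim G : ℝ) ≤
      (((G.cliqueNum : ℝ) - 2) / ((G.cliqueNum : ℝ) - 1)) * Fintype.card V := by
  classical
  have hω3 : 3 ≤ G.cliqueNum := by omega
  have hωr : (3 : ℝ) ≤ (G.cliqueNum : ℝ) := by exact_mod_cast hω3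
  have hpos : (0 : ℝ) < (G.cliqueNum : ℝ) - 1 := by linarith
  obtain ⟨a, b, hab, hnab⟩ := exists_nonadj h1
  rw [div_mul_eq_mul_div, le_div_iff₀ hpos]
  by_cases hcase : Fintype.card V = G.cliqueNum + 1
  · have hdim : localDim G ≤ Fintype.card V - 2 := by
      have h := localDim_le_of_goodSet (goodSet_pair hnab)
      rwa [Finset.card_insert_of_notMem (by simp [hab]), Finset.card_singleton] at h
    have h2n : 2 ≤ Fintype.card V := by omega
    have hd := (Nat.cast_le (α := ℝ)).mpr hdim
    rw [Nat.cast_sub h2n] at hd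
    norm_num at hd
    have hnr : (Fintype.card V : ℝ) = (G.cliqueNum : ℝ) + 1 := by exact_mod_cast hcase
    rw [hnr] at hd ⊢
    nlinarith [mul_le_mul_of_nonneg_right hd hpos.le]
  · have hcov := fun v => exists_nonadj_avoiding (G := G) (by omega) v
    obtain ⟨x, y, z, hxy, hxz, hyz, hgood⟩ :=
      exists_goodSet_triple hconn ⟨a, b, hab, hnab⟩ hcov
    have hcard : ({x, y, z} : Finset V).card = 3 := by
      rw [Finset.card_insert_of_notMem (by simp [hxy, hxz]),
        Finset.card_insert_of_notMem (by simp [hyz]), Finset.card_singleton]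
    have hdim : localDim G ≤ Fintype.card V - 3 := by
      have h := localDim_le_of_goodSet hgood
      rwa [hcard] at h
    have h3n : 3 ≤ Fintype.card V := by omega
    have hd := (Nat.cast_le (α := ℝ)).mpr hdim
    rw [Nat.cast_sub h3n] at hd
    norm_num at hd
    have hnub : (Fintype.card V : ℝ) ≤ (G.cliqueNum : ℝ) + 3 := by
      have : Fintype.card V ≤ G.cliqueNum + 3 := by omega
      exact_mod_cast this
    nlinarith [mul_le_mul_of_nonneg_right hd hpos.le]
end
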